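/- Let (H, ‖·‖_H, ⟨·,·⟩_H) be a separable ℝ-Hilbert space containing more than one element, let 𝔹 ⊆ H be an orthonormal basis of H, let (Ω, F, P) be a probability space, let T ∈ (0,∞), η, δ ∈ ℝ, let λ : 𝔹 → ℝ satisfy sup_{b∈𝔹} (−λ_b) < η, let A : D(A) ⊆ H → H be the diagonal linear operator with D(A) = { v ∈ H : Σ_{b∈𝔹} |λ_b ⟨b,v⟩_H|^2 < ∞ } and A v = −Σ_{b∈𝔹} λ_b ⟨b,v⟩_H b for v ∈ D(A), let (H_r, ‖·‖_{H_r})_{r∈ℝ} be the family of interpolation spaces associated to η − A (described concretely in the context below), let w ∈ H, b_0 ∈ 𝔹, ξ : Ω → H_δ be F/B(H_δ)-measurable, and let F : H → H satisfy ⟨b_0, w⟩_H > 0, w = ⟨b_0, w⟩_H b_0, and F(v) = ‖v‖_H w for all v ∈ H. Let X : [0,T] × Ω → H_δ be B([0,T]) ⊗ F / B(H_δ)-measurable with X((0,T] × Ω) ⊆ H such that for every t ∈ (0,T] it holds P-a.s. that ∫_0^t ‖ e^{(t−s)A} F(X_s) ‖_{H_δ} ds < ∞ and P-a.s. that X_t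 = e^{tA} ξ + ∫_0^t e^{(t−s)A} F(X_s) ds (Bochner integral in H_δ). Then for all t ∈ (0,T] it holds that P( ξ ∈ H_{−1} ) = 1 and P-a.s. that ⟨b_0, w⟩_H · e^{−(λ_{b_0} + |η|) t} · [ 1 − e^{−( inf_{b∈𝔹} λ_b + η ) t} ] · ‖ ξ − ⟨b_0, ξ⟩ b_0 ‖_{H_{−1}} ≤ ⟨ b_0, X_t − e^{tA} ξ ⟩_H ≤ ‖ X_t − e^{tA} ξ ‖_H < ∞. -/

import Mathlib

open MeasureTheory Set
open scoped ENNReal Classical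

noncomputable section

/-- The squared `H_r`-norm, in the concrete coefficient realization of the interpolation
spaces associated to `η - A` for the diagonal operator `A` with eigenvalues `-λ_b`:
`‖c‖_{H_r}² = Σ_b (η + λ_b)^{2r} |c_b|²` (valued in `[0,∞]`). -/
def HNormSq {ι : Type*} (η : ℝ) (lam : ι → ℝ) (r : ℝ) (c : ι → ℝ) : ℝ≥0∞ :=
  ∑' b : ι, ENNReal.ofReal ((η + lam b) ^ (2 * r) * (c b) ^ 2)

/-- The `H_r`-norm `‖c‖_{H_r} = (Σ_b (η + λ_b)^{2r} |c_b|²)^{1/2}` as a real number. -/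
def HNorm {ι : Type*} (η : ℝ) (lam : ι → ℝ) (r : ℝ) (c : ι → ℝ) : ℝ :=
  Real.sqrt (HNormSq η lam r c).toReal

namespace NonlinearHeatAux

lemma hnorm_nonneg {ι : Type*} (η : ℝ) (lam : ι → ℝ) (r : ℝ) (c : ι → ℝ) :
    0 ≤ HNorm η lam r c := Real.sqrt_nonneg _

lemma hnormsq_single {ι : Type*} (η r : ℝ) (lam : ι → ℝ) (b₀ : ι) (v : ι → ℝ)
    (hv : ∀ b, b ≠ b₀ → v b = 0) :
    HNormSq η lam r v = ENNReal.ofReal ((η + lam b₀) ^ (2 * r) * v b₀ ^ 2) :=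
  tsum_eq_single b₀ (fun b hb => by rw [hv b hb]; simp)

lemma hnorm_single {ι : Type*} (η r : ℝ) (lam : ι → ℝ) (b₀ : ι) (h : 0 < η + lam b₀)
    (v : ι → ℝ) (hv : ∀ b, b ≠ b₀ → v b = 0) :
    HNorm η lam r v = (η + lam b₀) ^ r * |v b₀| := by
  have hx : (0:ℝ) < (η + lam b₀) ^ r := Real.rpow_pos_of_pos h r
  unfold HNorm
  rw [hnormsq_single η r lam b₀ v hv, ENNReal.toReal_ofReal
    (by positivity)]
  have h2 : (η + lam b₀) ^ (2 * r) = ((η + lam b₀) ^ r) ^ (2:ℕ) := by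
    rw [← Real.rpow_natCast ((η + lam b₀) ^ r) 2, ← Real.rpow_mul h.le]
    norm_num [mul_comm]
  rw [h2, show ((η + lam b₀) ^ r) ^ (2:ℕ) * v b₀ ^ 2 =
    ((η + lam b₀) ^ r * |v b₀|) ^ 2 by rw [mul_pow, sq_abs]]
  exact Real.sqrt_sq (by positivity)

lemma measurable_hnormsq {ι : Type*} [Countable ι] {α : Type*} [MeasurableSpace α]
    (η r : ℝ) (lam : ι → ℝ) {f : α → ι → ℝ} (hf : Measurable f) :
    Measurable fun a => HNormSq η lam r (f a) :=
  Measurable.ennreal_tsum fun b =>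
    (measurable_const.mul (((measurable_pi_apply b).comp hf).pow_const 2)).ennreal_ofReal

lemma measurable_hnorm {ι : Type*} [Countable ι] {α : Type*} [MeasurableSpace α]
    (η r : ℝ) (lam : ι → ℝ) {f : α → ι → ℝ} (hf : Measurable f) :
    Measurable fun a => HNorm η lam r (f a) :=
  ((measurable_hnormsq η r lam hf).ennreal_toReal).sqrt

lemma exp_setIntegral (c t : ℝ) (hc : 0 < c) (ht : 0 ≤ t) :
    ∫ s in Set.Ioc (0:ℝ) t, Real.exp (-c * s) = (1 - Real.exp (-c * t)) / c := by
  rw [← intervalIntegral.integral_of_le ht]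
  have hder : ∀ s ∈ Set.uIcc (0:ℝ) t, HasDerivAt (fun x => -Real.exp (-c * x) / c)
      (Real.exp (-c * s)) s := by
    intro s _
    have h1 : HasDerivAt (fun x : ℝ => -c * x) (-c) s := by
      simpa using (hasDerivAt_id s).const_mul (-c)
    have h2 := (Real.hasDerivAt_exp (-c * s)).comp s h1
    have h4 := (h2.div_const c).neg
    have heq : -(Real.exp (-c * s) * -c / c) = Real.exp (-c * s) := by
      rw [mul_neg, neg_div, neg_neg, mul_div_assoc, div_self hc.ne', mul_one]
    rw [show Real.exp (-c * s) = -(Real.exp (-c * s) * -c / c) from heq.symm]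
    have h5 : (fun x => -Real.exp (-c * x) / c) = -fun x => (Real.exp ∘ HMul.hMul (-c)) x / c := by
      funext x; simp only [Pi.neg_apply, Function.comp_apply]; ring
    rw [h5]; exact h4
  rw [intervalIntegral.integral_eq_sub_of_hasDerivAt hder
    ((Real.continuous_exp.comp (continuous_const.mul continuous_id)).intervalIntegrable 0 t)]
  field_simp
  simp only [mul_zero, neg_zero, Real.exp_zero]
  ring

lemma exp_conv_lower (t a₀ a l η : ℝ) (ht : 0 < t) (h₀ : 0 < a₀ + η)
    (ha : 0 < a + η) (hla : l ≤ a) (hl : 0 < l + η) :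
    Real.exp (-(a₀ + |η|) * t) * (1 - Real.exp (-(l + η) * t)) / (η + a)
      ≤ ∫ s in Set.Ioc (0:ℝ) t, Real.exp (-a₀ * (t - s)) * Real.exp (-a * s) := by
  have key : ∫ s in Set.Ioc (0:ℝ) t, Real.exp (-a₀ * t) * Real.exp (-(a + η) * s)
      ≤ ∫ s in Set.Ioc (0:ℝ) t, Real.exp (-a₀ * (t - s)) * Real.exp (-a * s) := by
    refine setIntegral_mono_on ?_ ?_ measurableSet_Ioc ?_
    · exact (Continuous.integrableOn_Ioc (by continuity))
    · exact (Continuous.integrableOn_Ioc (by continuity))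
    · intro s hs
      have h1 : Real.exp (-a₀ * (t - s)) * Real.exp (-a * s)
          = Real.exp (-a₀ * t) * (Real.exp ((a₀ + η) * s) * Real.exp (-(a + η) * s)) := by
        rw [← Real.exp_add, ← Real.exp_add, ← Real.exp_add]; ring_nf
      rw [h1]
      have h2 : (1:ℝ) ≤ Real.exp ((a₀ + η) * s) := Real.one_le_exp (by nlinarith [hs.1])
      calc Real.exp (-a₀ * t) * Real.exp (-(a + η) * s)
          = Real.exp (-a₀ * t) * (1 * Real.exp (-(a + η) * s)) := by ring
        _ ≤ Real.exp (-a₀ * t) * (Real.exp ((a₀ + η) * s) * Real.exp (-(a + η) * s)) := by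
            gcongr
  have hcomp : ∫ s in Set.Ioc (0:ℝ) t, Real.exp (-a₀ * t) * Real.exp (-(a + η) * s)
      = Real.exp (-a₀ * t) * ((1 - Real.exp (-(a + η) * t)) / (a + η)) := by
    rw [integral_const_mul, exp_setIntegral (a + η) t ha ht.le]
  refine le_trans ?_ (hcomp ▸ key)
  rw [show η + a = a + η from add_comm η a, ← mul_div_assoc]
  rw [div_le_div_iff_of_pos_right ha]
  have hA : Real.exp (-(a₀ + |η|) * t) ≤ Real.exp (-a₀ * t) :=
    Real.exp_le_exp.mpr (by nlinarith [abs_nonneg η])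
  have hB : 1 - Real.exp (-(l + η) * t) ≤ 1 - Real.exp (-(a + η) * t) := by
    have : Real.exp (-(a + η) * t) ≤ Real.exp (-(l + η) * t) :=
      Real.exp_le_exp.mpr (by nlinarith)
    linarith
  have hBnn : (0:ℝ) ≤ 1 - Real.exp (-(l + η) * t) := by
    have : Real.exp (-(l + η) * t) ≤ 1 := Real.exp_le_one_iff.mpr (by nlinarith)
    linarith
  exact mul_le_mul hA hB hBnn (Real.exp_pos _).le

end NonlinearHeatAux

set_option maxHeartbeats 8000000

/-- **Regularity barrier for deterministic nonlinear heat equations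
(Proposition on nonlinear heat equations).**
Let `H` be a separable ℝ-Hilbert space with orthonormal basis `(b)_{b∈ι}`, realized via
coefficient functions `ι → ℝ`; let `A` be the diagonal operator with eigenvalues `-λ_b`,
`sup_b (-λ_b) < η`, with interpolation spaces `H_r` realized as the weighted ℓ²-spaces
with squared norm `HNormSq η lam r`; the semigroup acts by `(e^{tA} c)_b = e^{-λ_b t} c_b`.
Let `w ∈ H`, `b₀ ∈ ι`, `⟨b₀,w⟩ > 0`, `w = ⟨b₀,w⟩ b₀`, `F(v) = ‖v‖_H w`, let
`ξ : Ω → H_δ` be measurable, and let `X : [0,T] × Ω → H_δ` be a jointly measurable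
process with `X((0,T] × Ω) ⊆ H` such that for every `t ∈ (0,T]` it holds P-a.s. that
`∫_0^t ‖e^{(t-s)A} F(X_s)‖_{H_δ} ds < ∞` and P-a.s. that
`X_t = e^{tA} ξ + ∫_0^t e^{(t-s)A} F(X_s) ds`.
Then for all `t ∈ (0,T]` one has `P(ξ ∈ H_{-1}) = 1` and P-a.s.
`⟨b₀,w⟩ e^{-(λ_{b₀}+|η|)t} (1 - e^{-(inf_b λ_b + η)t}) ‖ξ - ⟨b₀,ξ⟩b₀‖_{H_{-1}}
  ≤ ⟨b₀, X_t - e^{tA}ξ⟩ ≤ ‖X_t - e^{tA}ξ‖_H < ∞`. -/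
theorem nonlinear_heat_regularity_barrier
    {ι : Type*} [Countable ι] [Nonempty ι]
    {Ω : Type*} [MeasurableSpace Ω] (P : Measure Ω) [IsProbabilityMeasure P]
    (T : ℝ) (hT : 0 < T) (η δ : ℝ)
    (lam : ι → ℝ)
    (h_bdd : BddAbove (Set.range fun b => -lam b))
    (h_sup : sSup (Set.range fun b => -lam b) < η)
    (w : ι → ℝ) (b₀ : ι)
    (hw_mem : HNormSq η lam 0 w < ⊤)
    (hw_pos : 0 < w b₀)
    (hw_supp : ∀ b : ι, b ≠ b₀ → w b = 0)
    (ξ : Ω → ι → ℝ) (hξ_meas : Measurable ξ)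
    (hξ_mem : ∀ ω : Ω, HNormSq η lam δ (ξ ω) < ⊤)
    (X : ℝ → Ω → ι → ℝ)
    (hX_meas : Measurable (fun q : Set.Icc (0:ℝ) T × Ω => X (q.1 : ℝ) q.2))
    (hX_mem : ∀ t ∈ Set.Icc (0:ℝ) T, ∀ ω : Ω, HNormSq η lam δ (X t ω) < ⊤)
    (hX_H : ∀ t ∈ Set.Ioc (0:ℝ) T, ∀ ω : Ω, HNormSq η lam 0 (X t ω) < ⊤)
    (hX_int : ∀ t ∈ Set.Ioc (0:ℝ) T, ∀ᵐ ω ∂P,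
      (∫⁻ s in Set.Ioc (0:ℝ) t,
        ENNReal.ofReal (HNorm η lam δ
          (fun b => Real.exp (-lam b * (t - s)) *
            (HNorm η lam 0 (X s ω) * w b)))) < ⊤)
    (hX_eq : ∀ t ∈ Set.Ioc (0:ℝ) T, ∀ᵐ ω ∂P, ∀ b : ι,
      X t ω b = Real.exp (-lam b * t) * ξ ω b +
        ∫ s in Set.Ioc (0:ℝ) t,
          Real.exp (-lam b * (t - s)) * HNorm η lam 0 (X s ω) * w b) :
    ∀ t ∈ Set.Ioc (0:ℝ) T,
      P {ω | HNormSq η lam (-1) (ξ ω) < ⊤} = 1 ∧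
      ∀ᵐ ω ∂P,
        (w b₀ * Real.exp (-(lam b₀ + |η|) * t) *
            (1 - Real.exp (-((⨅ b, lam b) + η) * t)) *
            HNorm η lam (-1) (fun b => if b = b₀ then 0 else ξ ω b) ≤
          X t ω b₀ - Real.exp (-lam b₀ * t) * ξ ω b₀) ∧
        (X t ω b₀ - Real.exp (-lam b₀ * t) * ξ ω b₀ ≤
          HNorm η lam 0 (fun b => X t ω b - Real.exp (-lam b * t) * ξ ω b)) ∧
        HNormSq η lam 0 (fun b => X t ω b - Real.exp (-lam b * t) * ξ ω b) < ⊤ := by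
  classical
  open NonlinearHeatAux in
  have hpos : ∀ b, 0 < η + lam b := fun b => by
    have h1 : -lam b ≤ sSup (Set.range fun b => -lam b) := le_csSup h_bdd ⟨b, rfl⟩
    linarith
  have hbddb : BddBelow (Set.range lam) := by
    refine ⟨-sSup (Set.range fun b => -lam b), ?_⟩
    rintro x ⟨b, rfl⟩
    have h1 : -lam b ≤ sSup (Set.range fun b => -lam b) := le_csSup h_bdd ⟨b, rfl⟩
    linarith
  have hinf_le : ∀ b, (⨅ b, lam b) ≤ lam b := fun b => ciInf_le hbddb b
  have hinf_pos : 0 < (⨅ b, lam b) + η := by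
    have h1 : -sSup (Set.range fun b => -lam b) ≤ ⨅ b, lam b :=
      le_ciInf fun b => by
        have h2 : -lam b ≤ sSup (Set.range fun b => -lam b) := le_csSup h_bdd ⟨b, rfl⟩
        linarith
    linarith
  intro t ht
  have htT : t ∈ Set.Icc (0:ℝ) T := ⟨ht.1.le, ht.2⟩
  -- the measurable modification
  set Φ : ℝ → Ω → ι → ℝ :=
    fun s ω => X ((Set.projIcc (0:ℝ) T hT.le s : Set.Icc (0:ℝ) T) : ℝ) ω with hΦdef
  have hΦX : ∀ s ∈ Set.Icc (0:ℝ) T, ∀ ω, Φ s ω = X s ω := by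
    intro s hs ω
    rw [hΦdef]
    simp only [Set.projIcc_of_mem hT.le hs]
  have hΦmeas : Measurable fun q : ℝ × Ω => Φ q.1 q.2 := by
    have h1 : Measurable fun q : ℝ × Ω => ((Set.projIcc (0:ℝ) T hT.le q.1, q.2) :
        Set.Icc (0:ℝ) T × Ω) :=
      (continuous_projIcc.measurable.comp measurable_fst).prodMk measurable_snd
    exact hX_meas.comp h1
  clear_value Φ
  -- Fubini: a.s. in ω, a.e. in s the orthogonal components are linear
  have hfub : ∀ᵐ ω ∂P, ∀ᵐ s ∂(volume.restrict (Set.Ioc (0:ℝ) t)),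
      ∀ b, b ≠ b₀ → Φ s ω b = Real.exp (-lam b * s) * ξ ω b := by
    set μ := volume.restrict (Set.Ioc (0:ℝ) t) with hμ
    set E : Set (Ω × ℝ) :=
      {p | ¬ ∀ b, b ≠ b₀ → Φ p.2 p.1 b = Real.exp (-lam b * p.2) * ξ p.1 b} with hE
    have hEeq : E = ⋃ b : ι, {p : Ω × ℝ |
        b ≠ b₀ ∧ Φ p.2 p.1 b ≠ Real.exp (-lam b * p.2) * ξ p.1 b} := by
      ext p; simp [hE]
    have hEmeas : MeasurableSet E := by
      rw [hEeq]
      refine MeasurableSet.iUnion fun b => ?_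
      by_cases hb : b = b₀
      · simp only [hb, ne_eq, not_true_eq_false, false_and, Set.setOf_false]
        exact MeasurableSet.empty
      · have heq2 : {p : Ω × ℝ | b ≠ b₀ ∧ Φ p.2 p.1 b ≠ Real.exp (-lam b * p.2) * ξ p.1 b}
            = {p : Ω × ℝ | Φ p.2 p.1 b = Real.exp (-lam b * p.2) * ξ p.1 b}ᶜ := by
          ext p; simp [hb]
        rw [heq2]
        have h1 : Measurable fun p : Ω × ℝ => Φ p.2 p.1 b :=
          (measurable_pi_apply b).comp (hΦmeas.comp measurable_swap)
        have h2 : Measurable fun p : Ω × ℝ => Real.exp (-lam b * p.2) * ξ p.1 b :=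
          ((measurable_snd.const_mul (-lam b)).exp).mul
            ((measurable_pi_apply b).comp (hξ_meas.comp measurable_fst))
        exact (measurableSet_eq_fun h1 h2).compl
    have hslice : ∀ s ∈ Set.Ioc (0:ℝ) t, P ((fun ω => (ω, s)) ⁻¹' E) = 0 := by
      intro s hs
      have hsT : s ∈ Set.Ioc (0:ℝ) T := ⟨hs.1, hs.2.trans ht.2⟩
      have hae := hX_eq s hsT
      refine measure_mono_null ?_ (ae_iff.mp hae)
      intro ω hω
      simp only [Set.mem_preimage, hE, Set.mem_setOf_eq] at hω
      simp only [Set.mem_setOf_eq]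
      intro hall
      apply hω
      intro b hb
      have h3 := hall b
      rw [hw_supp b hb] at h3
      simp only [mul_zero, integral_zero, add_zero] at h3
      rw [hΦX s ⟨hsT.1.le, hsT.2⟩ ω, h3]
    have hnull : (P.prod μ) E = 0 := by
      rw [Measure.prod_apply_symm hEmeas]
      have hzero : (fun s => P ((fun ω => (ω, s)) ⁻¹' E)) =ᵐ[μ] 0 := by
        rw [hμ]
        filter_upwards [ae_restrict_mem measurableSet_Ioc] with s hs
        exact hslice s hs
      rw [lintegral_congr_ae hzero]
      simp
    have haep : ∀ᵐ p ∂(P.prod μ), ∀ b, b ≠ b₀ →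
        Φ p.2 p.1 b = Real.exp (-lam b * p.2) * ξ p.1 b := by
      rw [ae_iff]
      exact hnull
    exact Measure.ae_ae_of_ae_prod haep
  -- constants
  have hK : 0 < Real.exp (-(lam b₀ + |η|) * t) * (1 - Real.exp (-((⨅ b, lam b) + η) * t)) := by
    apply mul_pos (Real.exp_pos _)
    have h1 : Real.exp (-((⨅ b, lam b) + η) * t) < 1 := by
      rw [Real.exp_lt_one_iff]; nlinarith [ht.1]
    linarith
  have main : ∀ᵐ ω ∂P, HNormSq η lam (-1) (ξ ω) < ⊤ ∧
      ((w b₀ * Real.exp (-(lam b₀ + |η|) * t) *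
            (1 - Real.exp (-((⨅ b, lam b) + η) * t)) *
            HNorm η lam (-1) (fun b => if b = b₀ then 0 else ξ ω b) ≤
          X t ω b₀ - Real.exp (-lam b₀ * t) * ξ ω b₀) ∧
        (X t ω b₀ - Real.exp (-lam b₀ * t) * ξ ω b₀ ≤
          HNorm η lam 0 (fun b => X t ω b - Real.exp (-lam b * t) * ξ ω b)) ∧
        HNormSq η lam 0 (fun b => X t ω b - Real.exp (-lam b * t) * ξ ω b) < ⊤) := by
    filter_upwards [hfub, hX_int t ht, hX_eq t ht] with ω hfs hint heqt
    have hnn_meas : Measurable fun s => HNorm η lam 0 (Φ s ω) :=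
      NonlinearHeatAux.measurable_hnorm η 0 lam
        (hΦmeas.comp (measurable_id.prodMk measurable_const))
    have hnn_nonneg : ∀ s, 0 ≤ HNorm η lam 0 (Φ s ω) := fun s =>
      NonlinearHeatAux.hnorm_nonneg _ _ _ _
    have hg_meas : Measurable fun s =>
        Real.exp (-lam b₀ * (t - s)) * HNorm η lam 0 (Φ s ω) * w b₀ :=
      ((((measurable_id.const_sub t).const_mul (-lam b₀)).exp).mul hnn_meas).mul_const _
    have hg_nonneg : ∀ s, 0 ≤ Real.exp (-lam b₀ * (t - s)) * HNorm η lam 0 (Φ s ω) * w b₀ :=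
      fun s => mul_nonneg (mul_nonneg (Real.exp_pos _).le (hnn_nonneg s)) hw_pos.le
    have hXΦ : ∀ s ∈ Set.Ioc (0:ℝ) t, X s ω = Φ s ω := fun s hs =>
      (hΦX s ⟨hs.1.le, hs.2.trans ht.2⟩ ω).symm
    -- fixed point equation with the measurable modification
    have heqt2 : ∀ b, X t ω b = Real.exp (-lam b * t) * ξ ω b +
        ∫ s in Set.Ioc (0:ℝ) t, Real.exp (-lam b * (t - s)) * HNorm η lam 0 (Φ s ω) * w b := by
      intro b
      rw [heqt b]
      congr 1
      exact setIntegral_congr_fun measurableSet_Ioc fun s hs => by rw [hXΦ s hs]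
    set Ig : ℝ := ∫ s in Set.Ioc (0:ℝ) t,
      Real.exp (-lam b₀ * (t - s)) * HNorm η lam 0 (Φ s ω) * w b₀ with hIgdef
    clear_value Ig
    have hdiff0 : X t ω b₀ - Real.exp (-lam b₀ * t) * ξ ω b₀ = Ig := by
      rw [heqt2 b₀, ← hIgdef]; ring
    have hdiffb : ∀ b, b ≠ b₀ → X t ω b - Real.exp (-lam b * t) * ξ ω b = 0 := by
      intro b hb
      rw [heqt2 b, hw_supp b hb]
      simp
    -- integrability of the convolution integrand
    have hint2 : (∫⁻ s in Set.Ioc (0:ℝ) t, ENNReal.ofReal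
        (Real.exp (-lam b₀ * (t - s)) * HNorm η lam 0 (Φ s ω) * w b₀)) < ⊤ := by
      have hC : (0:ℝ) < (η + lam b₀) ^ (δ:ℝ) := Real.rpow_pos_of_pos (hpos b₀) δ
      have h1 : ∀ᵐ s ∂(volume.restrict (Set.Ioc (0:ℝ) t)),
          ENNReal.ofReal (HNorm η lam δ
            (fun b => Real.exp (-lam b * (t - s)) * (HNorm η lam 0 (X s ω) * w b)))
          = ENNReal.ofReal ((η + lam b₀) ^ (δ:ℝ)) * ENNReal.ofReal
            (Real.exp (-lam b₀ * (t - s)) * HNorm η lam 0 (Φ s ω) * w b₀) := by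
        filter_upwards [ae_restrict_mem measurableSet_Ioc] with s hs
        rw [NonlinearHeatAux.hnorm_single η δ lam b₀ (hpos b₀) _
          (fun b hb => by rw [hw_supp b hb, mul_zero, mul_zero])]
        rw [hXΦ s hs]
        rw [abs_of_nonneg (mul_nonneg (Real.exp_pos _).le
          (mul_nonneg (hnn_nonneg s) hw_pos.le))]
        rw [← ENNReal.ofReal_mul hC.le]
        congr 1
        ring
      rw [lintegral_congr_ae h1] at hint
      rw [lintegral_const_mul _ (hg_meas.ennreal_ofReal)] at hint
      exact ENNReal.lt_top_of_mul_ne_top_right hint.ne (by simp [hC])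
    have hg_int : IntegrableOn (fun s =>
        Real.exp (-lam b₀ * (t - s)) * HNorm η lam 0 (Φ s ω) * w b₀) (Set.Ioc (0:ℝ) t) := by
      refine ⟨hg_meas.aestronglyMeasurable, ?_⟩
      rw [hasFiniteIntegral_iff_ofReal (ae_of_all _ hg_nonneg)]
      exact hint2
    have hIg0 : 0 ≤ Ig := by
      rw [hIgdef]
      exact setIntegral_nonneg measurableSet_Ioc fun s _ => hg_nonneg s
    -- the finite-dimensional lower bounds
    have hJbound : ∀ J : Finset ι, b₀ ∉ J →
        w b₀ * (Real.exp (-(lam b₀ + |η|) * t) *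
          (1 - Real.exp (-((⨅ b, lam b) + η) * t))) *
        Real.sqrt (∑ b ∈ J, (η + lam b) ^ (2 * (-1:ℝ)) * (ξ ω b) ^ 2) ≤ Ig := by
      intro J hJ
      have hS0 : (0:ℝ) ≤ ∑ b ∈ J, (η + lam b) ^ (2 * (-1:ℝ)) * (ξ ω b) ^ 2 :=
        Finset.sum_nonneg fun b _ => mul_nonneg (Real.rpow_nonneg (hpos b).le _) (sq_nonneg _)
      rcases eq_or_lt_of_le hS0 with h0 | hSpos
      · rw [← h0, Real.sqrt_zero, mul_zero]; exact hIg0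
      set S : ℝ := ∑ b ∈ J, (η + lam b) ^ (2 * (-1:ℝ)) * (ξ ω b) ^ 2 with hSdef
      set N : ℝ := Real.sqrt S with hNdef
      have hN : 0 < N := Real.sqrt_pos.mpr hSpos
      have hNsq : N ^ 2 = S := Real.sq_sqrt hS0
      set u : ι → ℝ := fun b => (η + lam b) ^ (-1:ℝ) * ξ ω b / N with hu
      have husq : ∑ b ∈ J, u b ^ 2 = 1 := by
        have h1 : ∀ b ∈ J, u b ^ 2 = ((η + lam b) ^ (2 * (-1:ℝ)) * (ξ ω b) ^ 2) / S := by
          intro b _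
          rw [hu]
          simp only []
          rw [div_pow, mul_pow, hNsq]
          congr 2
          rw [← Real.rpow_natCast ((η + lam b) ^ (-1:ℝ)) 2, ← Real.rpow_mul (hpos b).le]
          norm_num [mul_comm]
        rw [Finset.sum_congr rfl h1, ← Finset.sum_div, ← hSdef, div_self hSpos.ne']
      have huξ : ∀ b ∈ J, 0 ≤ u b * ξ ω b := by
        intro b _
        rw [hu]
        simp only []
        rw [div_mul_eq_mul_div]
        apply div_nonneg _ hN.le
        rw [mul_assoc]
        exact mul_nonneg (Real.rpow_nonneg (hpos b).le _) (mul_self_nonneg _)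
      -- the comparison integrand
      have hlow_cont : Continuous fun s => w b₀ * (Real.exp (-lam b₀ * (t - s)) *
          ∑ b ∈ J, u b * (Real.exp (-lam b * s) * ξ ω b)) := by
        fun_prop
      have hlow_int : IntegrableOn (fun s => w b₀ * (Real.exp (-lam b₀ * (t - s)) *
          ∑ b ∈ J, u b * (Real.exp (-lam b * s) * ξ ω b))) (Set.Ioc (0:ℝ) t) :=
        hlow_cont.integrableOn_Ioc
      -- pointwise comparison
      have hptwise : ∀ᵐ s ∂(volume.restrict (Set.Ioc (0:ℝ) t)),
          w b₀ * (Real.exp (-lam b₀ * (t - s)) *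
            ∑ b ∈ J, u b * (Real.exp (-lam b * s) * ξ ω b))
          ≤ Real.exp (-lam b₀ * (t - s)) * HNorm η lam 0 (Φ s ω) * w b₀ := by
        filter_upwards [hfs, ae_restrict_mem measurableSet_Ioc] with s hsb hs
        have hsT : s ∈ Set.Ioc (0:ℝ) T := ⟨hs.1, hs.2.trans ht.2⟩
        have hΦfin : HNormSq η lam 0 (Φ s ω) < ⊤ := by
          rw [hΦX s ⟨hsT.1.le, hsT.2⟩ ω]
          exact hX_H s hsT ω
        have hsum_le : ∑ b ∈ J, (Φ s ω b) ^ 2 ≤ (HNormSq η lam 0 (Φ s ω)).toReal := by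
          have h1 : ENNReal.ofReal (∑ b ∈ J, (Φ s ω b) ^ 2) ≤ HNormSq η lam 0 (Φ s ω) := by
            rw [ENNReal.ofReal_sum_of_nonneg (fun b _ => sq_nonneg _)]
            refine le_trans (le_of_eq ?_) (ENNReal.sum_le_tsum J)
            refine Finset.sum_congr rfl fun b _ => ?_
            norm_num
          calc ∑ b ∈ J, (Φ s ω b) ^ 2
              = (ENNReal.ofReal (∑ b ∈ J, (Φ s ω b) ^ 2)).toReal :=
                (ENNReal.toReal_ofReal (Finset.sum_nonneg fun b _ => sq_nonneg _)).symm
            _ ≤ _ := ENNReal.toReal_mono hΦfin.ne h1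
        have hCS : (∑ b ∈ J, u b * Φ s ω b) ≤ HNorm η lam 0 (Φ s ω) := by
          have h2 : (∑ b ∈ J, u b * Φ s ω b) ^ 2
              ≤ (∑ b ∈ J, u b ^ 2) * ∑ b ∈ J, (Φ s ω b) ^ 2 :=
            Finset.sum_mul_sq_le_sq_mul_sq J u (fun b => Φ s ω b)
          rw [husq, one_mul] at h2
          have h3 : (∑ b ∈ J, u b * Φ s ω b) ^ 2 ≤ (HNormSq η lam 0 (Φ s ω)).toReal :=
            h2.trans hsum_le
          calc ∑ b ∈ J, u b * Φ s ω b ≤ |∑ b ∈ J, u b * Φ s ω b| := le_abs_self _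
            _ = Real.sqrt ((∑ b ∈ J, u b * Φ s ω b) ^ 2) := (Real.sqrt_sq_eq_abs _).symm
            _ ≤ Real.sqrt (HNormSq η lam 0 (Φ s ω)).toReal := Real.sqrt_le_sqrt h3
            _ = HNorm η lam 0 (Φ s ω) := rfl
        have hΦb : ∀ b ∈ J, Φ s ω b = Real.exp (-lam b * s) * ξ ω b := fun b hb =>
          hsb b (fun h => hJ (h ▸ hb))
        calc w b₀ * (Real.exp (-lam b₀ * (t - s)) *
              ∑ b ∈ J, u b * (Real.exp (-lam b * s) * ξ ω b))
            = w b₀ * (Real.exp (-lam b₀ * (t - s)) * ∑ b ∈ J, u b * Φ s ω b) := by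
              congr 2
              exact (Finset.sum_congr rfl fun b hb => by rw [hΦb b hb]).symm
          _ ≤ w b₀ * (Real.exp (-lam b₀ * (t - s)) * HNorm η lam 0 (Φ s ω)) := by
              apply mul_le_mul_of_nonneg_left _ hw_pos.le
              exact mul_le_mul_of_nonneg_left hCS (Real.exp_pos _).le
          _ = Real.exp (-lam b₀ * (t - s)) * HNorm η lam 0 (Φ s ω) * w b₀ := by ring
      have hIlow : (∫ s in Set.Ioc (0:ℝ) t, w b₀ * (Real.exp (-lam b₀ * (t - s)) *
          ∑ b ∈ J, u b * (Real.exp (-lam b * s) * ξ ω b))) ≤ Ig := by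
        rw [hIgdef]
        exact integral_mono_ae hlow_int hg_int hptwise
      -- evaluation of the comparison integral
      have hsplit : (∫ s in Set.Ioc (0:ℝ) t, w b₀ * (Real.exp (-lam b₀ * (t - s)) *
          ∑ b ∈ J, u b * (Real.exp (-lam b * s) * ξ ω b)))
          = w b₀ * ∑ b ∈ J, (u b * ξ ω b) *
            ∫ s in Set.Ioc (0:ℝ) t, Real.exp (-lam b₀ * (t - s)) * Real.exp (-lam b * s) := by
        rw [integral_const_mul]
        congr 1
        have h4 : ∀ s : ℝ, Real.exp (-lam b₀ * (t - s)) *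
            ∑ b ∈ J, u b * (Real.exp (-lam b * s) * ξ ω b)
            = ∑ b ∈ J, (u b * ξ ω b) *
              (Real.exp (-lam b₀ * (t - s)) * Real.exp (-lam b * s)) := by
          intro s
          rw [Finset.mul_sum]
          exact Finset.sum_congr rfl fun b _ => by ring
        rw [setIntegral_congr_fun measurableSet_Ioc fun s _ => h4 s]
        rw [integral_finset_sum J fun b _ => ?_]
        · exact Finset.sum_congr rfl fun b _ => integral_const_mul _ _
        · exact Continuous.integrableOn_Ioc (by fun_prop)
      set KK := Real.exp (-(lam b₀ + |η|) * t) *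
        (1 - Real.exp (-((⨅ b, lam b) + η) * t)) with hKKdef
      have hterm : ∀ b ∈ J, (u b * ξ ω b) * (KK / (η + lam b))
          ≤ (u b * ξ ω b) * ∫ s in Set.Ioc (0:ℝ) t,
            Real.exp (-lam b₀ * (t - s)) * Real.exp (-lam b * s) := by
        intro b hb
        refine mul_le_mul_of_nonneg_left ?_ (huξ b hb)
        rw [hKKdef]
        exact NonlinearHeatAux.exp_conv_lower t (lam b₀) (lam b) (⨅ b, lam b) η ht.1
          (by linarith [hpos b₀]) (by linarith [hpos b]) (hinf_le b) hinf_pos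
      have hx2 : ∀ b, (η + lam b) ^ (-1:ℝ) / (η + lam b) = (η + lam b) ^ (2 * (-1:ℝ)) := by
        intro b
        rw [div_eq_mul_inv, ← Real.rpow_neg_one (η + lam b), ← Real.rpow_add (hpos b)]
        norm_num
      have hsum_eval : ∑ b ∈ J, (u b * ξ ω b) * (KK / (η + lam b)) = KK * N := by
        have h5 : ∀ b ∈ J, (u b * ξ ω b) * (KK / (η + lam b))
            = KK * (((η + lam b) ^ (2 * (-1:ℝ)) * (ξ ω b) ^ 2) / N) := by
          intro b _
          rw [← hx2 b, hu]
          simp only []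
          field_simp
        rw [Finset.sum_congr rfl h5, ← Finset.mul_sum, ← Finset.sum_div, ← hSdef, ← hNsq]
        rw [sq, mul_div_assoc, div_self hN.ne', mul_one]
      calc w b₀ * KK * N
          = w b₀ * ∑ b ∈ J, (u b * ξ ω b) * (KK / (η + lam b)) := by
            rw [hsum_eval]; ring
        _ ≤ w b₀ * ∑ b ∈ J, (u b * ξ ω b) * ∫ s in Set.Ioc (0:ℝ) t,
              Real.exp (-lam b₀ * (t - s)) * Real.exp (-lam b * s) :=
            mul_le_mul_of_nonneg_left (Finset.sum_le_sum hterm) hw_pos.le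
        _ = ∫ s in Set.Ioc (0:ℝ) t, w b₀ * (Real.exp (-lam b₀ * (t - s)) *
              ∑ b ∈ J, u b * (Real.exp (-lam b * s) * ξ ω b)) := hsplit.symm
        _ ≤ Ig := hIlow
    -- H_{-1} tail bound via the finite-dimensional bounds
    have hwK : 0 < w b₀ * (Real.exp (-(lam b₀ + |η|) * t) * (1 - Real.exp (-((⨅ b, lam b) + η) * t))) := mul_pos hw_pos hK
    have hM : ∀ J : Finset ι, ∑ b ∈ J, ENNReal.ofReal ((η + lam b) ^ (2 * (-1:ℝ)) *
        (if b = b₀ then 0 else ξ ω b) ^ 2)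
        ≤ ENNReal.ofReal ((Ig / (w b₀ * (Real.exp (-(lam b₀ + |η|) * t) * (1 - Real.exp (-((⨅ b, lam b) + η) * t))))) ^ 2) := by
      intro J
      rw [← ENNReal.ofReal_sum_of_nonneg
        (fun b _ => mul_nonneg (Real.rpow_nonneg (hpos b).le _) (sq_nonneg _))]
      apply ENNReal.ofReal_le_ofReal
      have h1 : ∑ b ∈ J, ((η + lam b) ^ (2 * (-1:ℝ)) * (if b = b₀ then 0 else ξ ω b) ^ 2)
          = ∑ b ∈ J.erase b₀, (η + lam b) ^ (2 * (-1:ℝ)) * (ξ ω b) ^ 2 := by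
        rw [← Finset.sum_subset (Finset.erase_subset b₀ J) ?_]
        · exact Finset.sum_congr rfl fun b hb => by
            rw [if_neg (Finset.ne_of_mem_erase hb)]
        · intro b hb hnb
          have hbb : b = b₀ := by
            by_contra hne
            exact hnb (Finset.mem_erase.mpr ⟨hne, hb⟩)
          subst hbb
          simp
      rw [h1]
      have h2 := hJbound (J.erase b₀) (Finset.notMem_erase b₀ J)
      have hS0' : (0:ℝ) ≤ ∑ b ∈ J.erase b₀, (η + lam b) ^ (2 * (-1:ℝ)) * (ξ ω b) ^ 2 :=
        Finset.sum_nonneg fun b _ => mul_nonneg (Real.rpow_nonneg (hpos b).le _) (sq_nonneg _)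
      have h3 : Real.sqrt (∑ b ∈ J.erase b₀, (η + lam b) ^ (2 * (-1:ℝ)) * (ξ ω b) ^ 2)
          ≤ Ig / (w b₀ * (Real.exp (-(lam b₀ + |η|) * t) * (1 - Real.exp (-((⨅ b, lam b) + η) * t)))) := by
        rw [le_div_iff₀ hwK]
        calc Real.sqrt (∑ b ∈ J.erase b₀, (η + lam b) ^ (2 * (-1:ℝ)) * (ξ ω b) ^ 2) *
              (w b₀ * (Real.exp (-(lam b₀ + |η|) * t) * (1 - Real.exp (-((⨅ b, lam b) + η) * t))))
            = w b₀ * (Real.exp (-(lam b₀ + |η|) * t) * (1 - Real.exp (-((⨅ b, lam b) + η) * t))) *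
              Real.sqrt (∑ b ∈ J.erase b₀, (η + lam b) ^ (2 * (-1:ℝ)) * (ξ ω b) ^ 2) := by
              ring
          _ ≤ Ig := h2
      calc ∑ b ∈ J.erase b₀, (η + lam b) ^ (2 * (-1:ℝ)) * (ξ ω b) ^ 2
          = Real.sqrt (∑ b ∈ J.erase b₀, (η + lam b) ^ (2 * (-1:ℝ)) * (ξ ω b) ^ 2) ^ 2 :=
            (Real.sq_sqrt hS0').symm
        _ ≤ (Ig / (w b₀ * (Real.exp (-(lam b₀ + |η|) * t) * (1 - Real.exp (-((⨅ b, lam b) + η) * t))))) ^ 2 := pow_le_pow_left₀ (Real.sqrt_nonneg _) h3 2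
    have hperp_le : HNormSq η lam (-1) (fun b => if b = b₀ then 0 else ξ ω b)
        ≤ ENNReal.ofReal ((Ig / (w b₀ * (Real.exp (-(lam b₀ + |η|) * t) * (1 - Real.exp (-((⨅ b, lam b) + η) * t))))) ^ 2) := by
      unfold HNormSq
      rw [ENNReal.tsum_eq_iSup_sum]
      exact iSup_le hM
    have hξfin : HNormSq η lam (-1) (ξ ω) < ⊤ := by
      have h7 : ∀ b : ι, ENNReal.ofReal ((η + lam b) ^ (2 * (-1:ℝ)) * (ξ ω b) ^ 2)
          ≤ ENNReal.ofReal ((η + lam b) ^ (2 * (-1:ℝ)) * (if b = b₀ then 0 else ξ ω b) ^ 2)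
            + (if b = b₀ then ENNReal.ofReal ((η + lam b₀) ^ (2 * (-1:ℝ)) * (ξ ω b₀) ^ 2)
              else 0) := by
        intro b
        by_cases hb : b = b₀
        · subst hb; simp
        · simp [hb]
      have h8 : HNormSq η lam (-1) (ξ ω)
          ≤ HNormSq η lam (-1) (fun b => if b = b₀ then 0 else ξ ω b)
            + ENNReal.ofReal ((η + lam b₀) ^ (2 * (-1:ℝ)) * (ξ ω b₀) ^ 2) := by
        unfold HNormSq
        rw [← tsum_ite_eq b₀ (fun _ => ENNReal.ofReal ((η + lam b₀) ^ (2 * (-1:ℝ)) * (ξ ω b₀) ^ 2)),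
          ← ENNReal.tsum_add]
        exact ENNReal.tsum_le_tsum h7
      exact lt_of_le_of_lt h8 (ENNReal.add_lt_top.mpr
        ⟨lt_of_le_of_lt hperp_le ENNReal.ofReal_lt_top, ENNReal.ofReal_lt_top⟩)
    refine ⟨hξfin, ?_, ?_, ?_⟩
    · -- lower bound
      rw [hdiff0]
      have hnorm_perp : HNorm η lam (-1) (fun b => if b = b₀ then 0 else ξ ω b)
          ≤ Ig / (w b₀ * (Real.exp (-(lam b₀ + |η|) * t) * (1 - Real.exp (-((⨅ b, lam b) + η) * t)))) := by
        unfold HNorm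
        have h9 : (HNormSq η lam (-1) (fun b => if b = b₀ then 0 else ξ ω b)).toReal
            ≤ (Ig / (w b₀ * (Real.exp (-(lam b₀ + |η|) * t) * (1 - Real.exp (-((⨅ b, lam b) + η) * t))))) ^ 2 :=
          ENNReal.toReal_le_of_le_ofReal (by positivity) hperp_le
        calc Real.sqrt (HNormSq η lam (-1) (fun b => if b = b₀ then 0 else ξ ω b)).toReal
            ≤ Real.sqrt ((Ig / (w b₀ * (Real.exp (-(lam b₀ + |η|) * t) * (1 - Real.exp (-((⨅ b, lam b) + η) * t))))) ^ 2) := Real.sqrt_le_sqrt h9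
          _ = |Ig / (w b₀ * (Real.exp (-(lam b₀ + |η|) * t) * (1 - Real.exp (-((⨅ b, lam b) + η) * t))))| := Real.sqrt_sq_eq_abs _
          _ = Ig / (w b₀ * (Real.exp (-(lam b₀ + |η|) * t) * (1 - Real.exp (-((⨅ b, lam b) + η) * t)))) := abs_of_nonneg (div_nonneg hIg0 hwK.le)
      calc w b₀ * Real.exp (-(lam b₀ + |η|) * t) *
            (1 - Real.exp (-((⨅ b, lam b) + η) * t)) *
            HNorm η lam (-1) (fun b => if b = b₀ then 0 else ξ ω b)
          = (w b₀ * (Real.exp (-(lam b₀ + |η|) * t) * (1 - Real.exp (-((⨅ b, lam b) + η) * t)))) *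
            HNorm η lam (-1) (fun b => if b = b₀ then 0 else ξ ω b) := by ring
        _ ≤ (w b₀ * (Real.exp (-(lam b₀ + |η|) * t) * (1 - Real.exp (-((⨅ b, lam b) + η) * t)))) * (Ig / (w b₀ * (Real.exp (-(lam b₀ + |η|) * t) * (1 - Real.exp (-((⨅ b, lam b) + η) * t))))) :=
            mul_le_mul_of_nonneg_left hnorm_perp hwK.le
        _ = Ig := by rw [mul_comm, div_mul_cancel₀ _ hwK.ne']
    · have h10 := NonlinearHeatAux.hnorm_single η 0 lam b₀ (hpos b₀)
        (fun b => X t ω b - Real.exp (-lam b * t) * ξ ω b) hdiffb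
      rw [h10, Real.rpow_zero, one_mul]
      exact le_abs_self _
    · rw [NonlinearHeatAux.hnormsq_single η 0 lam b₀ _ hdiffb]
      exact ENNReal.ofReal_lt_top
  constructor
  · have hmeasS : MeasurableSet {ω | HNormSq η lam (-1) (ξ ω) < ⊤} :=
      measurableSet_lt (NonlinearHeatAux.measurable_hnormsq η (-1) lam hξ_meas)
        measurable_const
    refine (prob_compl_eq_zero_iff hmeasS).mp ?_
    have h11 : ∀ᵐ ω ∂P, HNormSq η lam (-1) (ξ ω) < ⊤ := main.mono fun ω h => h.1
    rw [ae_iff] at h11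
    rw [Set.compl_setOf]
    exact h11
  · exact main.mono fun ω h => h.2
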